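/- Let d be a prime and let Y₁, Y₂ be unitary d×d complex matrices. Then for every (k, l) ∈ (ZMod d)²: Σ_{(a,b) ∈ (ZMod d)²} | d^{−1} Tr( W_{k,l}† · Y₁† · W_{a,b} · Y₂ ) |² = 1. -/

import Mathlib

open Matrix Complex

noncomputable section

/-- ω = exp(2πi/d). -/
def omga (d : ℕ) : ℂ := Complex.exp (2 * Real.pi * Complex.I / d)

/-- The Weyl operator W_{k,l}: (j,j') entry is ω^{jk} if j' = j + l, else 0. -/
def weyl (d : ℕ) (k l : ZMod d) : Matrix (ZMod d) (ZMod d) ℂ :=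
  Matrix.of fun j j' => if j' = j + l then omga d ^ (j * k).val else 0


def chi (d : ℕ) (x : ZMod d) : ℂ := omga d ^ x.val

lemma omga_pow_card (d : ℕ) [NeZero d] : omga d ^ d = 1 :=
  (Complex.isPrimitiveRoot_exp d (NeZero.ne d)).pow_eq_one

lemma abs_omga (d : ℕ) [NeZero d] : ‖omga d‖ = 1 := by
  have : omga d = Complex.exp ((2 * Real.pi / d : ℝ) * Complex.I) := by
    unfold omga; push_cast; ring_nf
  rw [this, Complex.norm_exp_ofReal_mul_I]

lemma chi_zero (d : ℕ) : chi d 0 = 1 := by simp [chi, ZMod.val_zero]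

lemma chi_add (d : ℕ) [NeZero d] (x y : ZMod d) : chi d (x + y) = chi d x * chi d y := by
  unfold chi
  rw [← pow_add, ZMod.val_add]
  conv_rhs => rw [← Nat.mod_add_div (x.val + y.val) d]
  rw [pow_add, pow_mul, omga_pow_card, one_pow, mul_one]

lemma chi_mul_conj (d : ℕ) [NeZero d] (x : ZMod d) :
    chi d x * (starRingEnd ℂ) (chi d x) = 1 := by
  rw [Complex.mul_conj, Complex.normSq_eq_norm_sq]
  norm_cast
  simp [chi, map_pow, abs_omga]

lemma conj_chi (d : ℕ) [NeZero d] (x : ZMod d) :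
    (starRingEnd ℂ) (chi d x) = chi d (-x) := by
  have h1 : chi d x * chi d (-x) = 1 := by rw [← chi_add]; simp [chi_zero]
  have h2 := chi_mul_conj d x
  calc (starRingEnd ℂ) (chi d x) = (starRingEnd ℂ) (chi d x) * (chi d x * chi d (-x)) := by
        rw [h1, mul_one]
    _ = (chi d x * (starRingEnd ℂ) (chi d x)) * chi d (-x) := by ring
    _ = chi d (-x) := by rw [h2, one_mul]

lemma chi_sum (d : ℕ) [NeZero d] (hd : d.Prime) (x : ZMod d) :
    ∑ a : ZMod d, chi d (x * a) = if x = 0 then (d : ℂ) else 0 := by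
  haveI : Fact d.Prime := ⟨hd⟩
  split_ifs with hx
  · simp [hx, chi_zero, Finset.card_univ, ZMod.card]
  · have hsum : ∑ a : ZMod d, chi d a = 0 := by
      have hprim := Complex.isPrimitiveRoot_exp d (NeZero.ne d)
      have hgeo := hprim.geom_sum_eq_zero hd.one_lt
      calc ∑ a : ZMod d, chi d a = ∑ i ∈ Finset.range d, omga d ^ i := by
            refine Finset.sum_nbij' (fun a => a.val) (fun i => (i : ZMod d)) ?_ ?_ ?_ ?_ ?_
            · intro a _; exact Finset.mem_range.mpr (ZMod.val_lt a)
            · intro i _; exact Finset.mem_univ _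
            · intro a _; simp [ZMod.natCast_val, ZMod.cast_id]
            · intro i hi; exact ZMod.val_cast_of_lt (Finset.mem_range.mp hi)
            · intro a _; rfl
        _ = 0 := hgeo
    calc ∑ a : ZMod d, chi d (x * a)
        = ∑ a : ZMod d, chi d a := Fintype.sum_equiv (Equiv.mulLeft₀ x hx) _ _ (fun a => rfl)
      _ = 0 := hsum

lemma weyl_apply (d : ℕ) (k l : ZMod d) (j j' : ZMod d) :
    weyl d k l j j' = if j' = j + l then chi d (j * k) else 0 := rfl

lemma weyl_mem_unitaryGroup (d : ℕ) [NeZero d] (k l : ZMod d) :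
    weyl d k l ∈ Matrix.unitaryGroup (ZMod d) ℂ := by
  rw [Matrix.mem_unitaryGroup_iff]
  ext j j'
  rw [Matrix.mul_apply, Matrix.one_apply]
  simp only [Matrix.star_apply, weyl_apply, apply_ite star, star_zero]
  calc ∑ m : ZMod d, (if m = j + l then chi d (j * k) else 0) *
          (if m = j' + l then star (chi d (j' * k)) else 0)
      = ∑ m : ZMod d, (if m = j + l then
          (if m = j' + l then chi d (j * k) * star (chi d (j' * k)) else 0) else 0) := by
        apply Finset.sum_congr rfl; intro m _; split_ifs <;> simp_all
    _ = if j + l = j' + l then chi d (j * k) * star (chi d (j' * k)) else 0 := by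
        rw [Finset.sum_ite_eq' Finset.univ (j + l)]; simp
    _ = if j = j' then 1 else 0 := by
        by_cases h : j = j'
        · subst h; simp [chi_mul_conj d (j * k)]
        · have : ¬ (j + l = j' + l) := fun hh => h (add_right_cancel hh)
          simp [h, this]

/-- for unitary Y₁, Y₂ and any (k,l), the squared moduli of the coefficients
d^{−1} Tr(W_{k,l}† Y₁† W_{a,b} Y₂) over all (a,b) sum to 1. -/
theorem twisted_weyl_coefficients_sum_sq
    (d : ℕ) [NeZero d] (hd : d.Prime)
    (Y₁ Y₂ : Matrix (ZMod d) (ZMod d) ℂ)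
    (hY₁ : Y₁ ∈ Matrix.unitaryGroup (ZMod d) ℂ)
    (hY₂ : Y₂ ∈ Matrix.unitaryGroup (ZMod d) ℂ) :
    ∀ k l : ZMod d,
      ∑ ab : ZMod d × ZMod d,
        ‖(1 / (d : ℂ)) * ((weyl d k l)ᴴ * Y₁ᴴ * weyl d ab.1 ab.2 * Y₂).trace‖ ^ 2 = 1 := by
  intro k l
  set M : Matrix (ZMod d) (ZMod d) ℂ := Y₁ * weyl d k l * Y₂ᴴ with hM
  have hMu : M ∈ Matrix.unitaryGroup (ZMod d) ℂ :=
    mul_mem (mul_mem hY₁ (weyl_mem_unitaryGroup d k l)) (Unitary.star_mem hY₂)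
  have hMM : Mᴴ * M = 1 := by
    have := (Unitary.mem_iff.mp hMu).1
    simpa [Matrix.star_eq_conjTranspose] using this
  set c : ZMod d → ZMod d → ℂ := fun m b => (starRingEnd ℂ) (M m (m + b)) with hc
  have htr : ∀ a b : ZMod d,
      ((weyl d k l)ᴴ * Y₁ᴴ * weyl d a b * Y₂).trace
        = ∑ m : ZMod d, c m b * chi d (m * a) := by
    intro a b
    rw [Matrix.trace_mul_comm]
    have h2 : Y₂ * ((weyl d k l)ᴴ * Y₁ᴴ * weyl d a b) = Mᴴ * weyl d a b := by
      simp [hM, Matrix.conjTranspose_mul, Matrix.mul_assoc]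
    rw [h2]
    calc (Mᴴ * weyl d a b).trace
        = ∑ j : ZMod d, ∑ m : ZMod d, (starRingEnd ℂ) (M m j) * weyl d a b m j := by
          simp [Matrix.trace, Matrix.diag, Matrix.mul_apply, Matrix.conjTranspose_apply]
      _ = ∑ m : ZMod d, ∑ j : ZMod d, (starRingEnd ℂ) (M m j) * weyl d a b m j :=
          Finset.sum_comm
      _ = ∑ m : ZMod d, c m b * chi d (m * a) := by
          apply Finset.sum_congr rfl; intro m _
          simp [weyl_apply, mul_ite, mul_zero, Finset.sum_ite_eq' Finset.univ (m + b), hc]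
  -- the complex-valued Parseval identity
  have key : ∑ ab : ZMod d × ZMod d,
      ((1 / (d : ℂ)) * ((weyl d k l)ᴴ * Y₁ᴴ * weyl d ab.1 ab.2 * Y₂).trace) *
        (starRingEnd ℂ)
          ((1 / (d : ℂ)) * ((weyl d k l)ᴴ * Y₁ᴴ * weyl d ab.1 ab.2 * Y₂).trace) = 1 := by
    have hd0 : (d : ℂ) ≠ 0 := Nat.cast_ne_zero.mpr (NeZero.ne d)
    have step1 : ∀ a b : ZMod d,
        ((1 / (d : ℂ)) * ∑ m : ZMod d, c m b * chi d (m * a)) *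
          (starRingEnd ℂ) ((1 / (d : ℂ)) * ∑ m : ZMod d, c m b * chi d (m * a))
        = (1 / (d : ℂ))^2 * ∑ m : ZMod d, ∑ m' : ZMod d,
            (c m b * (starRingEnd ℂ) (c m' b)) * chi d ((m - m') * a) := by
      intro a b
      have hterm : ∀ m m' : ZMod d,
          (c m b * chi d (m * a)) * (starRingEnd ℂ) (c m' b * chi d (m' * a))
          = (c m b * (starRingEnd ℂ) (c m' b)) * chi d ((m - m') * a) := by
        intro m m'
        rw [map_mul (starRingEnd ℂ), conj_chi]
        have harg : chi d (m * a) * chi d (-(m' * a)) = chi d ((m - m') * a) := by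
          rw [← chi_add]; congr 1; ring
        calc c m b * chi d (m * a) * ((starRingEnd ℂ) (c m' b) * chi d (-(m' * a)))
            = (c m b * (starRingEnd ℂ) (c m' b)) * (chi d (m * a) * chi d (-(m' * a))) := by
              ring
          _ = (c m b * (starRingEnd ℂ) (c m' b)) * chi d ((m - m') * a) := by rw [harg]
      have hprod : (∑ m : ZMod d, c m b * chi d (m * a)) *
          (∑ m' : ZMod d, (starRingEnd ℂ) (c m' b * chi d (m' * a)))
          = ∑ m : ZMod d, ∑ m' : ZMod d,
              (c m b * (starRingEnd ℂ) (c m' b)) * chi d ((m - m') * a) := by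
        rw [Finset.sum_mul_sum]
        exact Finset.sum_congr rfl fun m _ => Finset.sum_congr rfl fun m' _ => hterm m m'
      have hconj : (starRingEnd ℂ) (1 / (d : ℂ)) = 1 / (d : ℂ) := by simp
      rw [map_mul (starRingEnd ℂ), map_sum, hconj, ← hprod]
      ring
    have step2 : ∀ b : ZMod d,
        ∑ a : ZMod d, ∑ m : ZMod d, ∑ m' : ZMod d,
            (c m b * (starRingEnd ℂ) (c m' b)) * chi d ((m - m') * a)
        = (d : ℂ) * ∑ m : ZMod d, c m b * (starRingEnd ℂ) (c m b) := by
      intro b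
      rw [Finset.sum_comm]
      rw [Finset.mul_sum]
      apply Finset.sum_congr rfl; intro m _
      rw [Finset.sum_comm]
      calc ∑ m' : ZMod d, ∑ a : ZMod d,
              (c m b * (starRingEnd ℂ) (c m' b)) * chi d ((m - m') * a)
          = ∑ m' : ZMod d, (c m b * (starRingEnd ℂ) (c m' b)) *
              (if m - m' = 0 then (d : ℂ) else 0) := by
            apply Finset.sum_congr rfl; intro m' _
            rw [← Finset.mul_sum, chi_sum d hd]
        _ = ∑ m' : ZMod d, if m = m' then (c m b * (starRingEnd ℂ) (c m' b)) * (d : ℂ) else 0 := by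
            apply Finset.sum_congr rfl; intro m' _
            by_cases h : m = m'
            · simp [h]
            · have hne : m - m' ≠ 0 := sub_ne_zero.mpr h
              simp [h, hne]
        _ = (d : ℂ) * (c m b * (starRingEnd ℂ) (c m b)) := by
            rw [Finset.sum_ite_eq Finset.univ m
              (fun m' => (c m b * (starRingEnd ℂ) (c m' b)) * (d : ℂ))]
            simp [mul_comm]
    have step3 : ∑ b : ZMod d, ∑ m : ZMod d, c m b * (starRingEnd ℂ) (c m b) = (d : ℂ) := by
      calc ∑ b : ZMod d, ∑ m : ZMod d, c m b * (starRingEnd ℂ) (c m b)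
          = ∑ m : ZMod d, ∑ b : ZMod d,
              (starRingEnd ℂ) (M m (m + b)) * M m (m + b) := by
            rw [Finset.sum_comm]
            apply Finset.sum_congr rfl; intro m _
            apply Finset.sum_congr rfl; intro b _
            simp [hc]
        _ = ∑ m : ZMod d, ∑ j : ZMod d, (starRingEnd ℂ) (M m j) * M m j := by
            apply Finset.sum_congr rfl; intro m _
            exact Fintype.sum_equiv (Equiv.addLeft m) _ _ (fun b => rfl)
        _ = (Mᴴ * M).trace := by
            simp [Matrix.trace, Matrix.diag, Matrix.mul_apply, Matrix.conjTranspose_apply]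
            exact Finset.sum_comm
        _ = (d : ℂ) := by rw [hMM, Matrix.trace_one]; simp [ZMod.card]
    calc ∑ ab : ZMod d × ZMod d,
          ((1 / (d : ℂ)) * ((weyl d k l)ᴴ * Y₁ᴴ * weyl d ab.1 ab.2 * Y₂).trace) *
            (starRingEnd ℂ)
              ((1 / (d : ℂ)) * ((weyl d k l)ᴴ * Y₁ᴴ * weyl d ab.1 ab.2 * Y₂).trace)
        = ∑ a : ZMod d, ∑ b : ZMod d,
            ((1 / (d : ℂ)) * ∑ m : ZMod d, c m b * chi d (m * a)) *
              (starRingEnd ℂ) ((1 / (d : ℂ)) * ∑ m : ZMod d, c m b * chi d (m * a)) := by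
          rw [Fintype.sum_prod_type]
          apply Finset.sum_congr rfl; intro a _
          apply Finset.sum_congr rfl; intro b _
          rw [htr a b]
      _ = ∑ b : ZMod d, ∑ a : ZMod d,
            (1 / (d : ℂ))^2 * ∑ m : ZMod d, ∑ m' : ZMod d,
              (c m b * (starRingEnd ℂ) (c m' b)) * chi d ((m - m') * a) := by
          rw [Finset.sum_comm]
          exact Finset.sum_congr rfl fun b _ => Finset.sum_congr rfl fun a _ => step1 a b
      _ = (1 / (d : ℂ))^2 * ∑ b : ZMod d, ∑ a : ZMod d, ∑ m : ZMod d, ∑ m' : ZMod d,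
              (c m b * (starRingEnd ℂ) (c m' b)) * chi d ((m - m') * a) := by
          rw [Finset.mul_sum]
          exact Finset.sum_congr rfl fun b _ => (Finset.mul_sum _ _ _).symm
      _ = (1 / (d : ℂ))^2 * ((d : ℂ) * ∑ b : ZMod d, ∑ m : ZMod d,
            c m b * (starRingEnd ℂ) (c m b)) := by
          congr 1
          rw [Finset.mul_sum]
          exact Finset.sum_congr rfl fun b _ => step2 b
      _ = 1 := by rw [step3]; field_simp
  -- transfer back to real norms
  have hreal : ∀ z : ℂ, ((‖z‖ : ℂ)) ^ 2 = z * (starRingEnd ℂ) z := by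
    intro z
    rw [← Complex.ofReal_pow, Complex.mul_conj, Complex.sq_norm]
  have hfinal : ((∑ ab : ZMod d × ZMod d,
      ‖(1 / (d : ℂ)) * ((weyl d k l)ᴴ * Y₁ᴴ * weyl d ab.1 ab.2 * Y₂).trace‖ ^ 2 : ℝ) : ℂ)
      = 1 := by
    push_cast
    rw [Finset.sum_congr rfl fun ab _ => hreal _]
    exact key
  exact_mod_cast hfinal


end
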